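/- (Gelfond; Newman–Slater) For every nonnegative integer n and every real number x, |∏_{k=0}^{n} sin(2^k·x)| ≤ (√3/2)^n. Moreover this bound is nearly optimal: |∏_{k=0}^{n} sin(2^k·(π/3))| = (√3/2)^{n+1}. More generally (for multiplication by an integer r ≥ 1 in place of duplication), setting P_{r,n}(x) := ∏_{k=0}^{n} |sin(r^k·x)|: if r is odd then sup_{x∈ℝ} P_{r,n}(x) = 1, and if r is even then (cos(π/(2r+2)))^{n+1} ≤ sup_{x∈ℝ} P_{r,n}(x) ≤ (cos(π/(2r+2)))^n. -/

import Mathlib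

open scoped Real
open Finset

/-- `P r n x = |sin x · sin (r x) · sin (r² x) · … · sin (rⁿ x)|`. -/
noncomputable def P (r n : ℕ) (x : ℝ) : ℝ :=
  |∏ k ∈ Finset.range (n + 1), Real.sin ((r : ℝ) ^ k * x)|

lemma P_eq (r n : ℕ) (x : ℝ) :
    P r n x = ∏ k ∈ Finset.range (n + 1), |Real.sin ((r : ℝ) ^ k * x)| :=
  Finset.abs_prod _ _

lemma P_le_one (r n : ℕ) (x : ℝ) : P r n x ≤ 1 := by
  rw [P_eq]
  exact Finset.prod_le_one (fun k _ => abs_nonneg _) (fun k _ => Real.abs_sin_le_one _)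

lemma P_bdd (r n : ℕ) : BddAbove (Set.range (P r n)) :=
  ⟨1, by rintro y ⟨x, rfl⟩; exact P_le_one r n x⟩

lemma mono_aux {r : ℕ} (hr2 : 2 ≤ r) {t : ℝ}
    (ht0 : 0 ≤ t) (htβ : t ≤ π / (2 * (r:ℝ) + 2)) :
    Real.cos t * Real.sin (r * t)
      ≤ Real.cos (π / (2 * (r:ℝ) + 2)) ^ 2 := by
  have hπ := Real.pi_pos
  set β := π / (2 * (r:ℝ) + 2) with hβ
  have hr1 : (2:ℝ) ≤ (r:ℝ) := by exact_mod_cast hr2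
  have hden : (0:ℝ) < 2 * (r:ℝ) + 2 := by linarith
  have hβpos : 0 < β := div_pos hπ hden
  have hβ6 : β ≤ π / 6 := by
    rw [hβ, div_le_div_iff₀ hden (by norm_num)]
    nlinarith
  have hrβ : (r:ℝ) * β = π / 2 - β := by
    rw [hβ]; field_simp; ring
  have hmono : MonotoneOn (fun t : ℝ => Real.cos t * Real.sin (r * t))
      (Set.Icc 0 β) := by
    apply monotoneOn_of_hasDerivWithinAt_nonneg (f' := fun t : ℝ =>
      -Real.sin t * Real.sin (r * t) + Real.cos t * (Real.cos ((r:ℝ) * t) * ((r:ℝ) * 1)))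
      (convex_Icc _ _)
    · exact (Real.continuous_cos.mul (Real.continuous_sin.comp
        (continuous_const.mul continuous_id))).continuousOn
    · intro y hy
      exact (((Real.hasDerivAt_cos y).mul
        (((Real.hasDerivAt_sin ((r:ℝ) * y)).comp y
          ((hasDerivAt_id y).const_mul (r:ℝ))))).hasDerivWithinAt)
    · intro y hy
      rw [interior_Icc] at hy
      obtain ⟨hy0, hyβ⟩ := hy
      have hy2 : y ≤ π / 2 := by linarith
      have hry : (r:ℝ) * y ≤ π / 2 - β := by
        rw [← hrβ]; nlinarith
      have h1 : Real.sin y ≤ Real.sin β :=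
        Real.sin_le_sin_of_le_of_le_pi_div_two (by linarith) (by linarith) hyβ.le
      have h2 : Real.sin ((r:ℝ) * y) ≤ Real.sin ((r:ℝ) * β) :=
        Real.sin_le_sin_of_le_of_le_pi_div_two (by nlinarith) (by rw [hrβ]; linarith)
          (by nlinarith)
      have h3 : Real.cos β ≤ Real.cos y :=
        Real.cos_le_cos_of_nonneg_of_le_pi hy0.le (by linarith) hyβ.le
      have h4 : Real.cos ((r:ℝ) * β) ≤ Real.cos ((r:ℝ) * y) :=
        Real.cos_le_cos_of_nonneg_of_le_pi (by positivity) (by rw [hrβ]; linarith)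
          (by nlinarith)
      have h5 : Real.sin ((r:ℝ) * β) = Real.cos β := by
        rw [hrβ, Real.sin_pi_div_two_sub]
      have h6 : Real.cos ((r:ℝ) * β) = Real.sin β := by
        rw [hrβ, Real.cos_pi_div_two_sub]
      have hsy : 0 ≤ Real.sin y := Real.sin_nonneg_of_nonneg_of_le_pi hy0.le (by linarith)
      have hsry : 0 ≤ Real.sin ((r:ℝ) * y) :=
        Real.sin_nonneg_of_nonneg_of_le_pi (by positivity) (by nlinarith)
      have hcy : 0 ≤ Real.cos y :=
        Real.cos_nonneg_of_mem_Icc ⟨by linarith, hy2⟩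
      have hry0 : 0 ≤ (r:ℝ) * y := by positivity
      have hcry : 0 ≤ Real.cos ((r:ℝ) * y) :=
        Real.cos_nonneg_of_mem_Icc ⟨by linarith, by nlinarith⟩
      have hsb : 0 ≤ Real.sin β := Real.sin_nonneg_of_nonneg_of_le_pi hβpos.le (by linarith)
      have hcb : 0 ≤ Real.cos β := Real.cos_nonneg_of_mem_Icc ⟨by linarith, by linarith⟩
      nlinarith [mul_le_mul h1 h2 hsry hsb, mul_le_mul h3 h4 (by rw [h6]; exact hsb) hcy,
        mul_nonneg hcy hcry]
  have := hmono (Set.mem_Icc.2 ⟨ht0, htβ⟩) (Set.mem_Icc.2 ⟨hβpos.le, le_refl _⟩) htβ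
  calc Real.cos t * Real.sin (r * t)
      ≤ Real.cos β * Real.sin ((r:ℝ) * β) := this
    _ = Real.cos β ^ 2 := by rw [hrβ, Real.sin_pi_div_two_sub]; ring

lemma abs_sin_eq {y : ℝ} (hy : |y| ≤ π / 2) : |Real.sin y| = Real.sin |y| := by
  rcases abs_cases y with ⟨h1, h2⟩ | ⟨h1, h2⟩
  · rw [h1, abs_of_nonneg (Real.sin_nonneg_of_nonneg_of_le_pi h2
      (by have := Real.pi_pos; rw [h1] at hy; linarith))]
  · rw [h1, Real.sin_neg]
    rw [abs_of_nonpos]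
    apply Real.sin_nonpos_of_nonpos_of_neg_pi_le h2.le
    have := Real.pi_pos
    rw [h1] at hy
    linarith

lemma abs_neg_one_zpow_mul (m : ℤ) (z : ℝ) : |(-1:ℝ)^m * z| = |z| := by
  rcases Int.even_or_odd m with hm | hm
  · rw [hm.neg_one_zpow, one_mul]
  · rw [hm.neg_one_zpow, neg_one_mul, abs_neg]

lemma key {r : ℕ} (hr2 : 2 ≤ r) (hre : Even r) {θ : ℝ}
    (h : Real.cos (π / (2 * (r:ℝ) + 2)) ≤ |Real.sin θ|) :
    |Real.sin θ| * |Real.sin ((r:ℝ) * θ)| ≤ Real.cos (π / (2 * (r:ℝ) + 2)) ^ 2 := by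
  have hπ := Real.pi_pos
  set β := π / (2 * (r:ℝ) + 2) with hβ
  have hr1 : (2:ℝ) ≤ (r:ℝ) := by exact_mod_cast hr2
  have hden : (0:ℝ) < 2 * (r:ℝ) + 2 := by linarith
  have hβpos : 0 < β := div_pos hπ hden
  have hβ6 : β ≤ π / 6 := by
    rw [hβ, div_le_div_iff₀ hden (by norm_num)]
    nlinarith
  have hrβ : (r:ℝ) * β = π / 2 - β := by
    rw [hβ]; field_simp; ring
  -- reduce θ mod π
  set m : ℤ := round (θ / π) with hm
  set u : ℝ := |θ - m * π| with hu
  have hu2 : u ≤ π / 2 := by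
    have h1 : |θ / π - m| ≤ 1 / 2 := abs_sub_round (θ / π)
    have h2 : θ - m * π = (θ / π - m) * π := by field_simp
    rw [hu, h2, abs_mul, abs_of_pos hπ]
    nlinarith
  have hu0 : 0 ≤ u := abs_nonneg _
  have husin : |Real.sin θ| = Real.sin u := by
    have h1 : Real.sin θ = (-1 : ℝ) ^ m * Real.sin (θ - m * π) := by
      rw [← Real.sin_add_int_mul_pi (θ - m * π) m]; ring_nf
    rw [h1, abs_neg_one_zpow_mul, abs_sin_eq hu2]
  have hursin : |Real.sin ((r:ℝ) * θ)| = |Real.sin ((r:ℝ) * u)| := by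
    have h1 : (r:ℝ) * θ = (r:ℝ) * (θ - m * π) + (((r:ℤ) * m : ℤ) : ℝ) * π := by push_cast; ring
    have h2 : Even ((r:ℤ) * m) := (Int.even_coe_nat r |>.2 hre).mul_right m
    rw [h1, Real.sin_add_int_mul_pi, h2.neg_one_zpow, one_mul]
    rcases abs_cases (θ - m * π) with ⟨h3, _⟩ | ⟨h3, _⟩
    · rw [hu, h3]
    · rw [hu, h3, mul_neg, Real.sin_neg, abs_neg]
  -- from the hypothesis, u ≥ π/2 - β
  have hub : π / 2 - β ≤ u := by
    by_contra hc
    push_neg at hc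
    have : Real.sin u < Real.sin (π / 2 - β) :=
      Real.strictMonoOn_sin ⟨by linarith, hu2⟩ ⟨by linarith, by linarith⟩ hc
    rw [Real.sin_pi_div_two_sub] at this
    rw [husin] at h
    linarith
  set t : ℝ := π / 2 - u with ht
  have ht0 : 0 ≤ t := by rw [ht]; linarith
  have htβ : t ≤ β := by rw [ht]; linarith
  have hcos : Real.sin u = Real.cos t := by
    rw [ht, Real.cos_pi_div_two_sub]
  have hrt : |Real.sin ((r:ℝ) * u)| = Real.sin ((r:ℝ) * t) := by
    obtain ⟨s, hs⟩ := hre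
    have hs' : (r:ℝ) = 2 * s := by rw [hs]; push_cast; ring
    have h1 : (r:ℝ) * u = -((r:ℝ) * t) + (((s:ℤ)) : ℝ) * π := by
      rw [ht, hs']; push_cast; ring
    have hrt0 : 0 ≤ (r:ℝ) * t := by positivity
    have hrtb : (r:ℝ) * t ≤ π / 2 := by nlinarith
    have hrtπ : (r:ℝ) * t ≤ π := le_trans hrtb (by linarith)
    rw [h1, Real.sin_add_int_mul_pi, abs_neg_one_zpow_mul, Real.sin_neg, abs_neg,
      abs_of_nonneg (Real.sin_nonneg_of_nonneg_of_le_pi hrt0 hrtπ)]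
  rw [husin, hursin, hcos, hrt]
  exact mono_aux hr2 ht0 htβ

lemma chain {r : ℕ} (hr2 : 2 ≤ r) (hre : Even r) (n : ℕ) (x : ℝ) :
    P r n x ≤ Real.cos (π / (2 * (r:ℝ) + 2)) ^ n := by
  have hπ := Real.pi_pos
  set c := Real.cos (π / (2 * (r:ℝ) + 2)) with hc
  have hr1 : (2:ℝ) ≤ (r:ℝ) := by exact_mod_cast hr2
  have hβpos : 0 < π / (2*(r:ℝ)+2) := by positivity
  have hβ2 : π / (2*(r:ℝ)+2) ≤ π/2 := by
    rw [div_le_div_iff₀ (by linarith) (by norm_num)]; nlinarith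
  have hc0 : 0 ≤ c := Real.cos_nonneg_of_mem_Icc ⟨by linarith, hβ2⟩
  have hc1 : c ≤ 1 := Real.cos_le_one _
  have main : ∀ n : ℕ, (∏ k ∈ Finset.range (n+1), |Real.sin ((r:ℝ)^k * x)|)
      ≤ c ^ n * max c |Real.sin ((r:ℝ)^n * x)| := by
    intro n
    induction n with
    | zero => simpa [Finset.prod_range_one] using le_max_right c |Real.sin ((r:ℝ)^0 * x)|
    | succ n ih =>
      rw [Finset.prod_range_succ]
      have hsplit : ((r:ℝ)^(n+1) * x) = (r:ℝ) * ((r:ℝ)^n * x) := by ring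
      have habs : (0:ℝ) ≤ |Real.sin ((r:ℝ)^(n+1) * x)| := abs_nonneg _
      rcases le_or_gt |Real.sin ((r:ℝ)^n * x)| c with hle | hgt
      · have h1 : (∏ k ∈ Finset.range (n+1), |Real.sin ((r:ℝ)^k * x)|) ≤ c^n * c := by
          calc _ ≤ c ^ n * max c |Real.sin ((r:ℝ)^n * x)| := ih
            _ = c ^ n * c := by rw [max_eq_left hle]
        calc (∏ k ∈ Finset.range (n+1), |Real.sin ((r:ℝ)^k * x)|)
              * |Real.sin ((r:ℝ)^(n+1) * x)|
            ≤ (c^n * c) * |Real.sin ((r:ℝ)^(n+1) * x)| :=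
              mul_le_mul_of_nonneg_right h1 habs
          _ = c^(n+1) * |Real.sin ((r:ℝ)^(n+1) * x)| := by ring
          _ ≤ c^(n+1) * max c |Real.sin ((r:ℝ)^(n+1) * x)| :=
              mul_le_mul_of_nonneg_left (le_max_right _ _) (by positivity)
      · have hkey : |Real.sin ((r:ℝ)^n * x)| * |Real.sin ((r:ℝ)*((r:ℝ)^n * x))| ≤ c ^ 2 :=
          key hr2 hre hgt.le
        have h1 : (∏ k ∈ Finset.range (n+1), |Real.sin ((r:ℝ)^k * x)|)
            ≤ c^n * |Real.sin ((r:ℝ)^n * x)| := by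
          calc _ ≤ c ^ n * max c |Real.sin ((r:ℝ)^n * x)| := ih
            _ = _ := by rw [max_eq_right hgt.le]
        calc (∏ k ∈ Finset.range (n+1), |Real.sin ((r:ℝ)^k * x)|)
              * |Real.sin ((r:ℝ)^(n+1) * x)|
            ≤ (c^n * |Real.sin ((r:ℝ)^n * x)|) * |Real.sin ((r:ℝ)^(n+1) * x)| :=
              mul_le_mul_of_nonneg_right h1 habs
          _ = c^n * (|Real.sin ((r:ℝ)^n * x)| * |Real.sin ((r:ℝ)*((r:ℝ)^n * x))|) := by
              rw [hsplit]; ring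
          _ ≤ c^n * c^2 := mul_le_mul_of_nonneg_left hkey (by positivity)
          _ = c^(n+1) * c := by ring
          _ ≤ c^(n+1) * max c |Real.sin ((r:ℝ)^(n+1) * x)| :=
              mul_le_mul_of_nonneg_left (le_max_left _ _) (by positivity)
  rw [P_eq]
  calc _ ≤ c^n * max c |Real.sin ((r:ℝ)^n * x)| := main n
    _ ≤ c^n * 1 :=
      mul_le_mul_of_nonneg_left (max_le hc1 (Real.abs_sin_le_one _)) (by positivity)
    _ = c^n := mul_one _

lemma cos_sq_pow (k : ℕ) : Real.cos ((2:ℝ)^k * (π/3)) ^ 2 = 1/4 := by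
  induction k with
  | zero =>
    norm_num [Real.cos_pi_div_three]
  | succ k ih =>
    have h : (2:ℝ)^(k+1) * (π/3) = 2 * ((2:ℝ)^k * (π/3)) := by ring
    rw [h, Real.cos_two_mul]
    nlinarith [ih]

lemma abs_sin_pow_two (k : ℕ) : |Real.sin ((2:ℝ)^k * (π/3))| = Real.sqrt 3 / 2 := by
  have h1 : Real.sin ((2:ℝ)^k * (π/3)) ^ 2 = 3/4 := by
    have := Real.sin_sq_add_cos_sq ((2:ℝ)^k * (π/3))
    have := cos_sq_pow k
    linarith
  have h2 : (Real.sqrt 3 / 2) ^ 2 = 3/4 := by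
    rw [div_pow, Real.sq_sqrt (by norm_num : (3:ℝ) ≥ 0)]
    norm_num
  have h3 : (0:ℝ) ≤ Real.sqrt 3 / 2 := by positivity
  calc |Real.sin ((2:ℝ)^k * (π/3))| = Real.sqrt (Real.sin ((2:ℝ)^k * (π/3)) ^ 2) :=
        (Real.sqrt_sq_eq_abs _).symm
    _ = Real.sqrt ((Real.sqrt 3 / 2) ^ 2) := by rw [h1, h2]
    _ = Real.sqrt 3 / 2 := Real.sqrt_sq h3

lemma P_two_pi_div_three (n : ℕ) : P 2 n (π/3) = (Real.sqrt 3 / 2) ^ (n + 1) := by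
  rw [P_eq]
  have : ∀ k ∈ Finset.range (n+1),
      |Real.sin (((2:ℕ):ℝ)^k * (π/3))| = Real.sqrt 3 / 2 := by
    intro k _
    have := abs_sin_pow_two k
    norm_num at this ⊢
    exact this
  rw [Finset.prod_congr rfl this, Finset.prod_const, Finset.card_range]

lemma P_odd (r n : ℕ) (hodd : Odd r) : P r n (π/2) = 1 := by
  rw [P_eq]
  have : ∀ k ∈ Finset.range (n+1), |Real.sin ((r:ℝ)^k * (π/2))| = 1 := by
    intro k _
    obtain ⟨m, hm⟩ := hodd.pow (n := k)
    have h1 : ((r:ℝ))^k = 2 * m + 1 := by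
      rw [← Nat.cast_pow, hm]; push_cast; ring
    have h2 : ((r:ℝ))^k * (π/2) = π/2 + ((m:ℤ):ℝ) * π := by rw [h1]; push_cast; ring
    rw [h2, Real.sin_add_int_mul_pi, abs_neg_one_zpow_mul, Real.sin_pi_div_two, abs_one]
  rw [Finset.prod_congr rfl this, Finset.prod_const, one_pow]

lemma pow_mod_lemma {r : ℕ} (hr2 : 2 ≤ r) (hre : Even r) (k : ℕ) :
    r ^ (k+1) % (2*r+2) = r ∨ r ^ (k+1) % (2*r+2) = r + 2 := by
  induction k with
  | zero => left; rw [pow_one]; exact Nat.mod_eq_of_lt (by omega)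
  | succ k ih =>
    obtain ⟨t, ht⟩ := hre
    obtain ⟨s, rfl⟩ : ∃ s, t = s + 1 := ⟨t - 1, by omega⟩
    have hstep : r ^ (k+2) % (2*r+2) = (r^(k+1) % (2*r+2)) * r % (2*r+2) := by
      conv_lhs => rw [pow_succ, Nat.mul_mod]
      rw [Nat.mod_eq_of_lt (show r < 2*r+2 by omega)]
    rcases ih with h | h
    · right
      rw [hstep, h]
      have he : r * r = (2*r+2) * s + (r+2) := by subst ht; ring
      rw [he, Nat.mul_add_mod, Nat.mod_eq_of_lt (by omega)]
    · left
      rw [hstep, h]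
      have he : (r+2) * r = (2*r+2) * (s+1) + r := by subst ht; ring
      rw [he, Nat.mul_add_mod, Nat.mod_eq_of_lt (by omega)]

lemma val_at {r : ℕ} (hr2 : 2 ≤ r) (hre : Even r) (k : ℕ) :
    |Real.sin ((r:ℝ)^k * ((r:ℝ) * π / (2*(r:ℝ)+2)))| = Real.cos (π / (2*(r:ℝ)+2)) := by
  have hπ := Real.pi_pos
  have hr1 : (2:ℝ) ≤ (r:ℝ) := by exact_mod_cast hr2
  have hden : (0:ℝ) < 2*(r:ℝ)+2 := by linarith
  have hc0 : 0 ≤ Real.cos (π / (2*(r:ℝ)+2)) := by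
    apply Real.cos_nonneg_of_mem_Icc
    constructor
    · have : 0 < π / (2*(r:ℝ)+2) := by positivity
      linarith
    · rw [div_le_div_iff₀ hden (by norm_num)]; nlinarith
  obtain ⟨q, s, hs, hq⟩ : ∃ q s, (s = r ∨ s = r + 2) ∧ r^(k+1) = (2*r+2) * q + s := by
    rcases pow_mod_lemma hr2 hre k with h | h
    · exact ⟨r^(k+1) / (2*r+2), r, Or.inl rfl, by
        conv_lhs => rw [← Nat.div_add_mod (r^(k+1)) (2*r+2)]
        rw [h]⟩
    · exact ⟨r^(k+1) / (2*r+2), r+2, Or.inr rfl, by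
        conv_lhs => rw [← Nat.div_add_mod (r^(k+1)) (2*r+2)]
        rw [h]⟩
  have hangle : (r:ℝ)^k * ((r:ℝ) * π / (2*(r:ℝ)+2))
      = (s:ℝ) * π / (2*(r:ℝ)+2) + ((q:ℤ):ℝ) * π := by
    have h1 : ((r:ℝ))^k * (r:ℝ) = (2*(r:ℝ)+2) * q + s := by
      have h := congrArg (fun m : ℕ => (m:ℝ)) hq
      push_cast at h
      rw [← h]; ring
    have h2 : (r:ℝ)^k * ((r:ℝ)*π/(2*(r:ℝ)+2))
        = ((r:ℝ)^k * (r:ℝ)) * π / (2*(r:ℝ)+2) := by ring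
    rw [h2, h1]
    field_simp
    push_cast; ring
  rw [hangle, Real.sin_add_int_mul_pi, abs_neg_one_zpow_mul]
  rcases hs with h | h
  · rw [h]
    have h2 : (r:ℝ) * π / (2*(r:ℝ)+2) = π/2 - π / (2*(r:ℝ)+2) := by
      field_simp; ring
    rw [h2, Real.sin_pi_div_two_sub, abs_of_nonneg hc0]
  · rw [h]
    have h3 : ((r+2:ℕ):ℝ) = (r:ℝ) + 2 := by push_cast; ring
    have h2 : ((r:ℝ)+2) * π / (2*(r:ℝ)+2) = π/2 + π / (2*(r:ℝ)+2) := by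
      field_simp; ring
    rw [h3, h2, Real.sin_add, Real.sin_pi_div_two, Real.cos_pi_div_two, one_mul, zero_mul,
      add_zero, abs_of_nonneg hc0]

theorem stmt_18 :
    (∀ (n : ℕ) (x : ℝ), P 2 n x ≤ (Real.sqrt 3 / 2) ^ n) ∧
    (∀ n : ℕ, P 2 n (π / 3) = (Real.sqrt 3 / 2) ^ (n + 1)) ∧
    (∀ r n : ℕ, 0 < r → Odd r → (⨆ x : ℝ, P r n x) = 1) ∧
    (∀ r n : ℕ, 0 < r → Even r →
      (Real.cos (π / (2 * r + 2))) ^ (n + 1) ≤ (⨆ x : ℝ, P r n x) ∧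
        (⨆ x : ℝ, P r n x) ≤ (Real.cos (π / (2 * r + 2))) ^ n) := by
  refine ⟨?_, P_two_pi_div_three, ?_, ?_⟩
  · intro n x
    have h := chain (r := 2) le_rfl (by decide) n x
    have e : π / (2 * ((2:ℕ):ℝ) + 2) = π / 6 := by norm_num
    rw [e, Real.cos_pi_div_six] at h
    exact h
  · intro r n hr hodd
    apply le_antisymm
    · exact ciSup_le fun x => P_le_one r n x
    · have h := le_ciSup (P_bdd r n) (π/2)
      rw [P_odd r n hodd] at h
      exact h
  · intro r n hr hre
    have hr2 : 2 ≤ r := by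
      rcases hre with ⟨t, ht⟩; omega
    constructor
    · have h := le_ciSup (P_bdd r n) ((r:ℝ) * π / (2*(r:ℝ)+2))
      have hval : P r n ((r:ℝ)*π/(2*(r:ℝ)+2)) = Real.cos (π/(2*(r:ℝ)+2)) ^ (n+1) := by
        rw [P_eq, Finset.prod_congr rfl (fun k _ => val_at hr2 hre k), Finset.prod_const,
          Finset.card_range]
      rw [hval] at h
      exact h
    · exact ciSup_le fun x => chain hr2 hre n x
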